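/- Let q > 1 be real, λ = q − q^{−1}, let α, β ∈ ℂ satisfy α β̄ = ᾱ β, and let E ∈ ℂ. Then for every complex-valued function f and every real x ≠ 0, the eigenvalue equation (a⁺(a f))(x) = E f(x) holds if and only if f satisfies the difference equation E λ² x² f(x) = f(x)·(|α|² λ² x² + |β|² (q + q^{−1})) + f(q² x)·(−q^{−1} |β|² − i α β̄ q^{1/2} x λ) + f(q^{−2} x)·(−q |β|² + i α β̄ q^{1/2} x λ). -/

import Mathlib

/-- The q-derivative `(D_q f)(x) = (f(qx) - f(q⁻¹x)) / (x(q - q⁻¹))`. -/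
noncomputable def Dq (q : ℝ) (f : ℝ → ℂ) (x : ℝ) : ℂ :=
  (f (q * x) - f (q⁻¹ * x)) / ((x : ℂ) * ((q : ℂ) - (q : ℂ)⁻¹))

/-- The annihilation operator `a = α U⁻² + β U⁻¹ P` of the q-oscillator realized
on the quantum line: `(a f)(x) = α q f(q²x) - i β q^{1/2} (D_q f)(qx)`. -/
noncomputable def aOp (q : ℝ) (α β : ℂ) (f : ℝ → ℂ) (x : ℝ) : ℂ :=
  α * (q : ℂ) * f (q ^ 2 * x) -
    Complex.I * β * ((q ^ ((1 : ℝ) / 2) : ℝ) : ℂ) * Dq q f (q * x)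

/-- The creation operator `a⁺ = ᾱ U² + β̄ P U` of the q-oscillator realized
on the quantum line: `(a⁺ f)(x) = ᾱ q⁻¹ f(q⁻²x) - i β̄ q^{-3/2} (D_q f)(q⁻¹x)`. -/
noncomputable def aPlusOp (q : ℝ) (α β : ℂ) (f : ℝ → ℂ) (x : ℝ) : ℂ :=
  (starRingEnd ℂ) α * (q : ℂ)⁻¹ * f (q⁻¹ ^ 2 * x) -
    Complex.I * (starRingEnd ℂ) β * ((q ^ (-(3 : ℝ) / 2) : ℝ) : ℂ) * Dq q f (q⁻¹ * x)

/-- The eigenvalue equation `(a⁺(a f))(x) = E f(x)` holds at a point `x ≠ 0` if and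
only if `f` satisfies the difference equation
`E λ² x² f(x) = f(x)(|α|² λ² x² + |β|²(q + q⁻¹)) + f(q²x)(-q⁻¹|β|² - iαβ̄ q^{1/2} x λ)
  + f(q⁻²x)(-q|β|² + iαβ̄ q^{1/2} x λ)` at `x`, where `λ = q - q⁻¹`. -/
theorem eigen_iff_difference (q : ℝ) (hq : 1 < q) (α β : ℂ)
    (hαβ : α * (starRingEnd ℂ) β = (starRingEnd ℂ) α * β) (E : ℂ) :
    ∀ (f : ℝ → ℂ) (x : ℝ), x ≠ 0 →
      (aPlusOp q α β (aOp q α β f) x = E * f x ↔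
        E * ((q - q⁻¹ : ℝ) : ℂ) ^ 2 * (x : ℂ) ^ 2 * f x =
          f x * ((Complex.normSq α : ℂ) * ((q - q⁻¹ : ℝ) : ℂ) ^ 2 * (x : ℂ) ^ 2 +
              (Complex.normSq β : ℂ) * ((q : ℂ) + (q : ℂ)⁻¹)) +
          f (q ^ 2 * x) * (-(q : ℂ)⁻¹ * (Complex.normSq β : ℂ) -
              Complex.I * α * (starRingEnd ℂ) β * ((q ^ ((1 : ℝ) / 2) : ℝ) : ℂ) *
                (x : ℂ) * ((q - q⁻¹ : ℝ) : ℂ)) +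
          f (q⁻¹ ^ 2 * x) * (-(q : ℂ) * (Complex.normSq β : ℂ) +
              Complex.I * α * (starRingEnd ℂ) β * ((q ^ ((1 : ℝ) / 2) : ℝ) : ℂ) *
                (x : ℂ) * ((q - q⁻¹ : ℝ) : ℂ))) := by
  intro f x hx
  have hq0 : (0:ℝ) < q := lt_trans one_pos hq
  have hqr : q ≠ 0 := ne_of_gt hq0
  have hqc : (q:ℂ) ≠ 0 := by exact_mod_cast hqr
  have hxc : (x:ℂ) ≠ 0 := by exact_mod_cast hx
  have hs : ((q ^ ((1:ℝ)/2) : ℝ) : ℂ) ^ 2 = (q:ℂ) := by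
    rw [← Complex.ofReal_pow, ← Real.rpow_natCast (q ^ ((1:ℝ)/2)) 2, ← Real.rpow_mul hq0.le]
    norm_num
  have hs3r : (q ^ (-(3:ℝ)/2) : ℝ) * q^2 = q ^ ((1:ℝ)/2) := by
    rw [← Real.rpow_natCast q 2, ← Real.rpow_add hq0]
    norm_num
  have hs3 : ((q ^ (-(3:ℝ)/2) : ℝ) : ℂ) = ((q ^ ((1:ℝ)/2) : ℝ) : ℂ) / (q:ℂ)^2 := by
    rw [eq_div_iff (pow_ne_zero 2 hqc)]
    exact_mod_cast congrArg Complex.ofReal hs3r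
  have hL : ((q:ℂ) - (q:ℂ)⁻¹) ≠ 0 := by
    have h1 : q⁻¹ < q := lt_trans (inv_lt_one_of_one_lt₀ hq) hq
    have : (q - q⁻¹ : ℝ) ≠ 0 := by linarith
    exact_mod_cast this
  have hA1 : q * (q⁻¹ * x) = x := by field_simp
  have hA2 : q⁻¹ * (q⁻¹ * x) = q⁻¹^2 * x := by ring
  have hA3 : q^2 * (q⁻¹^2 * x) = x := by field_simp
  have hA4 : q * (q⁻¹^2 * x) = q⁻¹ * x := by field_simp
  have hA5 : q * (q * x) = q^2 * x := by ring
  have hA6 : q⁻¹ * (q * x) = x := by field_simp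
  have hqq : (q:ℂ) * (q:ℂ) - 1 ≠ 0 := by
    have e : (q:ℂ) * (q:ℂ) - 1 = ((q:ℂ) - (q:ℂ)⁻¹) * q := by
      rw [sub_mul, inv_mul_cancel₀ hqc]
    rw [e]
    exact mul_ne_zero hL hqc
  have hq1 : (q:ℂ) * (q:ℂ)⁻¹ = 1 := mul_inv_cancel₀ hqc
  have hg0 : aOp q α β f x * ((x:ℂ) * ((q:ℂ) ^ 2 - 1)) =
      α * (q:ℂ) * f (q ^ 2 * x) * ((x:ℂ) * ((q:ℂ) ^ 2 - 1)) -
        Complex.I * β * ((q ^ ((1:ℝ)/2) : ℝ) : ℂ) * (f (q ^ 2 * x) - f x) := by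
    simp only [aOp, Dq, hA5, hA6]
    push_cast
    field_simp [hqq]
    have h' : (-1 + (q:ℂ)^2) * (-1 + (q:ℂ)^2)⁻¹ = 1 := mul_inv_cancel₀ (by rw [show (-1 + (q:ℂ)^2) = (q:ℂ)*(q:ℂ) - 1 by ring]; exact hqq)
    linear_combination (Complex.I * β * ((q ^ ((1:ℝ)/2) : ℝ) : ℂ) * (f x - f (q ^ 2 * x))) * h'
  have hg2 : aOp q α β f (q⁻¹ ^ 2 * x) * ((x:ℂ) * ((q:ℂ) ^ 2 - 1)) =
      α * (q:ℂ) * f x * ((x:ℂ) * ((q:ℂ) ^ 2 - 1)) -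
        Complex.I * β * ((q ^ ((1:ℝ)/2) : ℝ) : ℂ) * (f x - f (q⁻¹ ^ 2 * x)) * (q:ℂ) ^ 2 := by
    simp only [aOp, Dq, hA3, hA4, hA1, hA2]
    generalize f (q⁻¹ ^ 2 * x) = G
    push_cast
    field_simp [hqq]
    have h' : (-1 + (q:ℂ)^2) * (-1 + (q:ℂ)^2)⁻¹ = 1 := mul_inv_cancel₀ (by rw [show (-1 + (q:ℂ)^2) = (q:ℂ)*(q:ℂ) - 1 by ring]; exact hqq)
    linear_combination ((q:ℂ) * Complex.I * β * ((q ^ ((1:ℝ)/2) : ℝ) : ℂ) * (G - f x)) * h'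
  have hm : aPlusOp q α β (aOp q α β f) x * ((x:ℂ) * ((q:ℂ) ^ 2 - 1) * (q:ℂ)) =
      (starRingEnd ℂ) α * aOp q α β f (q⁻¹ ^ 2 * x) * ((x:ℂ) * ((q:ℂ) ^ 2 - 1)) -
        Complex.I * (starRingEnd ℂ) β * ((q ^ ((1:ℝ)/2) : ℝ) : ℂ) *
          (aOp q α β f x - aOp q α β f (q⁻¹ ^ 2 * x)) * (q:ℂ) := by
    simp only [aPlusOp, Dq, hA1, hA2, hs3]
    generalize aOp q α β f (q⁻¹ ^ 2 * x) = G
    push_cast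
    field_simp [hqq]
    have h' : (-1 + (q:ℂ)^2) * (-1 + (q:ℂ)^2)⁻¹ = 1 := mul_inv_cancel₀ (by rw [show (-1 + (q:ℂ)^2) = (q:ℂ)*(q:ℂ) - 1 by ring]; exact hqq)
    linear_combination ((q:ℂ) * Complex.I * (starRingEnd ℂ) β * ((q ^ ((1:ℝ)/2) : ℝ) : ℂ) * (G - aOp q α β f x)) * h'
  have key : aPlusOp q α β (aOp q α β f) x * (((q - q⁻¹ : ℝ) : ℂ) ^ 2 * (x:ℂ) ^ 2) =
      f x * ((Complex.normSq α : ℂ) * ((q - q⁻¹ : ℝ) : ℂ) ^ 2 * (x : ℂ) ^ 2 +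
          (Complex.normSq β : ℂ) * ((q : ℂ) + (q : ℂ)⁻¹)) +
      f (q ^ 2 * x) * (-(q : ℂ)⁻¹ * (Complex.normSq β : ℂ) -
          Complex.I * α * (starRingEnd ℂ) β * ((q ^ ((1 : ℝ) / 2) : ℝ) : ℂ) *
            (x : ℂ) * ((q - q⁻¹ : ℝ) : ℂ)) +
      f (q⁻¹ ^ 2 * x) * (-(q : ℂ) * (Complex.normSq β : ℂ) +
          Complex.I * α * (starRingEnd ℂ) β * ((q ^ ((1 : ℝ) / 2) : ℝ) : ℂ) *
            (x : ℂ) * ((q - q⁻¹ : ℝ) : ℂ)) := by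
    push_cast
    linear_combination
      ((q:ℂ)⁻¹ * (x:ℂ) + (-1) * (q:ℂ)⁻¹ ^ 3 * (x:ℂ)) * hm +
      ((-1) * (q:ℂ)⁻¹ ^ 2 * ((q ^ ((1:ℝ)/2) : ℝ) : ℂ) * Complex.I * (starRingEnd ℂ) β) * hg0 +
      ((q:ℂ)⁻¹ * (x:ℂ) * (starRingEnd ℂ) α + (q:ℂ)⁻¹ ^ 2 * ((q ^ ((1:ℝ)/2) : ℝ) : ℂ) * Complex.I * (starRingEnd ℂ) β + (-1) * (q:ℂ)⁻¹ ^ 3 * (x:ℂ) * (starRingEnd ℂ) α) * hg2 +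
      ((-2) * f x * (x:ℂ) ^ 2 + f x * (q:ℂ)⁻¹ ^ 2 * (x:ℂ) ^ 2 + f x * (q:ℂ) ^ 2 * (x:ℂ) ^ 2) * Complex.mul_conj α +
      ((-1) * f (q⁻¹ ^ 2 * x) * (q:ℂ) + (-1) * f (q ^ 2 * x) * (q:ℂ)⁻¹ + f x * (q:ℂ)⁻¹ + f x * (q:ℂ)) * Complex.mul_conj β +
      (f (q⁻¹ ^ 2 * x) * (q:ℂ)⁻¹ * (x:ℂ) * ((q ^ ((1:ℝ)/2) : ℝ) : ℂ) * Complex.I + (-1) * f (q⁻¹ ^ 2 * x) * (q:ℂ) * (x:ℂ) * ((q ^ ((1:ℝ)/2) : ℝ) : ℂ) * Complex.I + (-1) * f x * (q:ℂ)⁻¹ * (x:ℂ) * ((q ^ ((1:ℝ)/2) : ℝ) : ℂ) * Complex.I + f x * (q:ℂ) * (x:ℂ) * ((q ^ ((1:ℝ)/2) : ℝ) : ℂ) * Complex.I) * hαβ +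
      (f (q⁻¹ ^ 2 * x) * ((q ^ ((1:ℝ)/2) : ℝ) : ℂ) ^ 2 * β * (starRingEnd ℂ) β + f (q ^ 2 * x) * (q:ℂ)⁻¹ ^ 2 * ((q ^ ((1:ℝ)/2) : ℝ) : ℂ) ^ 2 * β * (starRingEnd ℂ) β + (-1) * f x * ((q ^ ((1:ℝ)/2) : ℝ) : ℂ) ^ 2 * β * (starRingEnd ℂ) β + (-1) * f x * (q:ℂ)⁻¹ ^ 2 * ((q ^ ((1:ℝ)/2) : ℝ) : ℂ) ^ 2 * β * (starRingEnd ℂ) β) * Complex.I_sq +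
      ((-1) * f (q⁻¹ ^ 2 * x) * β * (starRingEnd ℂ) β + (-1) * f (q ^ 2 * x) * (q:ℂ)⁻¹ ^ 2 * β * (starRingEnd ℂ) β + f x * β * (starRingEnd ℂ) β + f x * (q:ℂ)⁻¹ ^ 2 * β * (starRingEnd ℂ) β) * hs +
      (f (q⁻¹ ^ 2 * x) * ((q ^ ((1:ℝ)/2) : ℝ) : ℂ) ^ 2 * Complex.I ^ 2 * β * (starRingEnd ℂ) β + (-1) * f (q⁻¹ ^ 2 * x) * (q:ℂ)⁻¹ * (x:ℂ) * ((q ^ ((1:ℝ)/2) : ℝ) : ℂ) * Complex.I * (starRingEnd ℂ) α * β + f (q⁻¹ ^ 2 * x) * (q:ℂ) * (x:ℂ) * ((q ^ ((1:ℝ)/2) : ℝ) : ℂ) * Complex.I * (starRingEnd ℂ) α * β + f (q⁻¹ ^ 2 * x) * (q:ℂ) * (q:ℂ)⁻¹ * ((q ^ ((1:ℝ)/2) : ℝ) : ℂ) ^ 2 * Complex.I ^ 2 * β * (starRingEnd ℂ) β + (-1) * f (q⁻¹ ^ 2 * x) * (q:ℂ) * (q:ℂ)⁻¹ ^ 2 *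 (x:ℂ) * ((q ^ ((1:ℝ)/2) : ℝ) : ℂ) * Complex.I * (starRingEnd ℂ) α * β + (-1) * f (q ^ 2 * x) * (q:ℂ)⁻¹ * β * (starRingEnd ℂ) β + f (q ^ 2 * x) * (q:ℂ)⁻¹ * (x:ℂ) * ((q ^ ((1:ℝ)/2) : ℝ) : ℂ) * Complex.I * α * (starRingEnd ℂ) β + (-1) * f (q ^ 2 * x) * (q:ℂ) * (x:ℂ) * ((q ^ ((1:ℝ)/2) : ℝ) : ℂ) * Complex.I * α * (starRingEnd ℂ) β + (-1) * f (q ^ 2 * x) * (q:ℂ) ^ 2 * (q:ℂ)⁻¹ * (x:ℂ) * ((q ^ ((1:ℝ)/2) : ℝ) : ℂ) * Complex.I * α * (starRingEnd ℂ) β + (-1) * f x * ((q ^ ((1:ℝ)/2) : ℝ) : ℂ) ^ 2 * Complex.I ^ 2 * β * (starRingEnd ℂ) β + (2) * f x * (x:ℂ) ^ 2 * (Complex.normSq α : ℂ) + (-2) * f x * (x:ℂ) ^ 2 * α * (starRingEnd ℂ) α + f x * (q:ℂ)⁻¹ * β * (starRingEnd ℂ) β + f x * (q:ℂ)⁻¹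 * (x:ℂ) * ((q ^ ((1:ℝ)/2) : ℝ) : ℂ) * Complex.I * (starRingEnd ℂ) α * β + (-1) * f x * (q:ℂ)⁻¹ * (x:ℂ) * ((q ^ ((1:ℝ)/2) : ℝ) : ℂ) * Complex.I * α * (starRingEnd ℂ) β + f x * (q:ℂ)⁻¹ ^ 2 * (x:ℂ) ^ 2 * α * (starRingEnd ℂ) α + (-1) * f x * (q:ℂ) * (x:ℂ) * ((q ^ ((1:ℝ)/2) : ℝ) : ℂ) * Complex.I * (starRingEnd ℂ) α * β + f x * (q:ℂ) * (x:ℂ) * ((q ^ ((1:ℝ)/2) : ℝ) : ℂ) * Complex.I * α * (starRingEnd ℂ) β + (-1) * f x * (q:ℂ) * (q:ℂ)⁻¹ * ((q ^ ((1:ℝ)/2) : ℝ) : ℂ) ^ 2 * Complex.I ^ 2 * β * (starRingEnd ℂ) β + (-1) * f x * (q:ℂ) * (q:ℂ)⁻¹ * (x:ℂ) ^ 2 * α * (starRingEnd ℂ) α + f x * (q:ℂ) * (q:ℂ)⁻¹ ^ 2 * (x:ℂ) * ((q ^ ((1:ℝ)/2) : ℝ) : ℂ) * Complex.I * (starRingEnd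 ℂ) α * β + f x * (q:ℂ) ^ 2 * (x:ℂ) ^ 2 * α * (starRingEnd ℂ) α + f x * (q:ℂ) ^ 2 * (q:ℂ)⁻¹ * (x:ℂ) * ((q ^ ((1:ℝ)/2) : ℝ) : ℂ) * Complex.I * α * (starRingEnd ℂ) β + (-1) * f x * (q:ℂ) ^ 2 * (q:ℂ)⁻¹ ^ 2 * (x:ℂ) ^ 2 * α * (starRingEnd ℂ) α + (-1) * aOp q α β f (q⁻¹ ^ 2 * x) * (q:ℂ)⁻¹ ^ 2 * (x:ℂ) * ((q ^ ((1:ℝ)/2) : ℝ) : ℂ) * Complex.I * (starRingEnd ℂ) β + (-1) * aOp q α β f (q⁻¹ ^ 2 * x) * (q:ℂ) * (q:ℂ)⁻¹ * (x:ℂ) * ((q ^ ((1:ℝ)/2) : ℝ) : ℂ) * Complex.I * (starRingEnd ℂ) β + aOp q α β f x * (q:ℂ)⁻¹ ^ 2 * (x:ℂ) * ((q ^ ((1:ℝ)/2) : ℝ) : ℂ) * Complex.I * (starRingEnd ℂ) β + aOp q α β f x * (q:ℂ) * (q:ℂ)⁻¹ * (x:ℂ) * ((q ^ ((1:ℝ)/2)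 : ℝ) : ℂ) * Complex.I * (starRingEnd ℂ) β + (-1) * aPlusOp q α β (aOp q α β f) x * (q:ℂ)⁻¹ ^ 2 * (x:ℂ) ^ 2 + aPlusOp q α β (aOp q α β f) x * (q:ℂ) * (q:ℂ)⁻¹ * (x:ℂ) ^ 2 + (-1) * aPlusOp q α β (aOp q α β f) x * (q:ℂ) ^ 2 * (x:ℂ) ^ 2 + aPlusOp q α β (aOp q α β f) x * (q:ℂ) ^ 2 * (q:ℂ)⁻¹ ^ 2 * (x:ℂ) ^ 2) * hq1
  have hk : (((q - q⁻¹ : ℝ) : ℂ) ^ 2 * (x:ℂ) ^ 2) ≠ 0 := by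
    push_cast
    exact mul_ne_zero (pow_ne_zero 2 hL) (pow_ne_zero 2 hxc)
  constructor
  · intro h
    linear_combination key - (((q - q⁻¹ : ℝ) : ℂ) ^ 2 * (x:ℂ) ^ 2) * h
  · intro h
    apply mul_right_cancel₀ hk
    rw [key]
    linear_combination -h
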